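/- If N ≥ 2, then in the free associative ℂ-algebra ℂ⟨x_1,…,x_N⟩ the family of polynomials (P_u), indexed by all nonempty finite sequences u of positive integers, is linearly independent over ℂ. -/

import Mathlib

open scoped BigOperators

/-- For a finite sequence `u = (u_1, …, u_r)` of exponents, the symmetric polynomial
`P_u = ∑ x_{i(1)}^{u_1} ⋯ x_{i(r)}^{u_r}`, the sum over all `i : Fin r → Fin N`
with neighboring indices distinct. -/
noncomputable def Pu (N : ℕ) {r : ℕ} (u : Fin r → ℕ) : FreeAlgebra ℂ (Fin N) :=
  ∑ i ∈ Finset.univ.filter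
      (fun i : Fin r → Fin N => ∀ j k : Fin r, (k : ℕ) = (j : ℕ) + 1 → i j ≠ i k),
    (List.ofFn fun j : Fin r => FreeAlgebra.ι ℂ (i j) ^ u j).prod

/-- `P_u` indexed by a nonempty list `u` of positive integers. -/
noncomputable def Pl (N : ℕ) (u : List ℕ) : FreeAlgebra ℂ (Fin N) :=
  Pu N u.get

namespace Stmt1Aux

variable {α : Type*}

/-- The word obtained from a run-length encoding. -/
def wordOf (p : List (α × ℕ)) : List α := (p.map fun x => List.replicate x.2 x.1).flatten

lemma wordOf_cons (x : α × ℕ) (p : List (α × ℕ)) :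
    wordOf (x :: p) = List.replicate x.2 x.1 ++ wordOf p := by
  simp [wordOf]

lemma head?_wordOf (x : α × ℕ) (p : List (α × ℕ)) (hx : 0 < x.2) :
    (wordOf (x :: p)).head? = some x.1 := by
  obtain ⟨a, n⟩ := x
  cases n with
  | zero => omega
  | succ n => simp [wordOf_cons, List.replicate_succ]

lemma cancel_replicate (a : α) : ∀ n m (s t : List α),
    (∀ b ∈ s.head?, b ≠ a) → (∀ b ∈ t.head?, b ≠ a) →
    List.replicate n a ++ s = List.replicate m a ++ t → n = m ∧ s = t := by
  intro n
  induction n with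
  | zero =>
    intro m s t hs ht h
    cases m with
    | zero => simpa using h
    | succ m =>
      rw [List.replicate_succ] at h
      simp only [List.replicate_zero, List.nil_append, List.cons_append] at h
      exact absurd rfl (hs a (by rw [h]; rfl))
  | succ n ih =>
    intro m s t hs ht h
    cases m with
    | zero =>
      rw [List.replicate_succ] at h
      simp only [List.replicate_zero, List.nil_append, List.cons_append] at h
      exact absurd rfl (ht a (by rw [← h]; rfl))
    | succ m =>
      rw [List.replicate_succ, List.replicate_succ] at h
      simp only [List.cons_append, List.cons.injEq] at h
      obtain ⟨hnm, hst⟩ := ih m s t hs ht h.2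
      exact ⟨by omega, hst⟩

lemma head?_wordOf_tail (x : α × ℕ) (p : List (α × ℕ))
    (hc : (x :: p).Chain' (fun y z => y.1 ≠ z.1)) (hp : ∀ y ∈ p, 0 < y.2) :
    ∀ b ∈ (wordOf p).head?, b ≠ x.1 := by
  cases p with
  | nil => simp [wordOf]
  | cons y q =>
    rw [head?_wordOf y q (hp y (by simp))]
    intro b hb
    simp only [Option.mem_def, Option.some.injEq] at hb
    subst hb
    have := (List.isChain_cons_cons.mp hc).1
    exact fun h => this h.symm

/-- Uniqueness of run-length encodings. -/
lemma rle_unique : ∀ (p q : List (α × ℕ)),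
    p.Chain' (fun y z => y.1 ≠ z.1) → q.Chain' (fun y z => y.1 ≠ z.1) →
    (∀ x ∈ p, 0 < x.2) → (∀ x ∈ q, 0 < x.2) → wordOf p = wordOf q → p = q := by
  intro p
  induction p with
  | nil =>
    intro q _ _ _ hq h
    cases q with
    | nil => rfl
    | cons y q' =>
      exfalso
      have h1 : (wordOf (y :: q')).head? = some y.1 := head?_wordOf y q' (hq y (by simp))
      rw [← h] at h1
      simp [wordOf] at h1
  | cons x p' ih =>
    intro q hp hq hpp hqq h
    cases q with
    | nil =>
      exfalso
      have h1 : (wordOf (x :: p')).head? = some x.1 := head?_wordOf x p' (hpp x (by simp))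
      rw [h] at h1
      simp [wordOf] at h1
    | cons y q' =>
      have hxy : x.1 = y.1 := by
        have h1 : (wordOf (x :: p')).head? = some x.1 := head?_wordOf x p' (hpp x (by simp))
        have h2 : (wordOf (y :: q')).head? = some y.1 := head?_wordOf y q' (hqq y (by simp))
        rw [h, h2] at h1
        exact (Option.some.injEq _ _ ▸ h1.symm)
      rw [wordOf_cons, wordOf_cons, ← hxy] at h
      have hcancel := cancel_replicate x.1 x.2 y.2 (wordOf p') (wordOf q')
        (head?_wordOf_tail x p' hp (fun z hz => hpp z (by simp [hz])))
        (by
          have := head?_wordOf_tail y q' hq (fun z hz => hqq z (by simp [hz]))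
          rw [← hxy] at this
          exact this)
        h
      have hp'q' : p' = q' := ih q' (List.isChain_cons.mp hp).2 (List.isChain_cons.mp hq).2
        (fun z hz => hpp z (by simp [hz])) (fun z hz => hqq z (by simp [hz])) hcancel.2
      have : x = y := Prod.ext hxy hcancel.1
      rw [this, hp'q']

lemma of_pow {β : Type*} (x : β) (n : ℕ) :
    (FreeMonoid.of x) ^ n = FreeMonoid.ofList (List.replicate n x) := by
  induction n with
  | zero => rfl
  | succ n ih =>
    rw [pow_succ', ih, List.replicate_succ]
    rfl

lemma prod_single {M : Type*} [Monoid M] :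
    ∀ (L : List M), (L.map fun w => MonoidAlgebra.single (R := ℂ) w 1).prod
      = MonoidAlgebra.single L.prod 1 := by
  intro L
  induction L with
  | nil => simp [MonoidAlgebra.one_def]
  | cons a L ih => simp [ih, MonoidAlgebra.single_mul_single]

lemma e_iota (N : ℕ) (x : Fin N) :
    FreeAlgebra.equivMonoidAlgebraFreeMonoid (FreeAlgebra.ι ℂ x)
      = MonoidAlgebra.single (FreeMonoid.of x) 1 := by
  simp [FreeAlgebra.equivMonoidAlgebraFreeMonoid, MonoidAlgebra.of_apply]

lemma prod_ofList {β : Type*} :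
    ∀ (L : List (List β)), ((L.map FreeMonoid.ofList).prod : FreeMonoid β)
      = FreeMonoid.ofList L.flatten := by
  intro L
  induction L with
  | nil => rfl
  | cons a L ih =>
    simp only [List.map_cons, List.prod_cons, List.flatten_cons, ih,
      ← FreeMonoid.ofList_append]

lemma e_monomial (N r : ℕ) (u : Fin r → ℕ) (i : Fin r → Fin N) :
    FreeAlgebra.equivMonoidAlgebraFreeMonoid
        ((List.ofFn fun j : Fin r => FreeAlgebra.ι ℂ (i j) ^ u j).prod)
      = MonoidAlgebra.single
          (FreeMonoid.ofList ((List.ofFn fun j : Fin r =>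
            List.replicate (u j) (i j)).flatten)) 1 := by
  rw [map_list_prod]
  have h1 : (List.ofFn fun j : Fin r => FreeAlgebra.ι ℂ (i j) ^ u j).map
      FreeAlgebra.equivMonoidAlgebraFreeMonoid
      = List.ofFn fun j : Fin r => MonoidAlgebra.single
          (FreeMonoid.ofList (List.replicate (u j) (i j))) (1 : ℂ) := by
    rw [List.map_ofFn]
    refine congrArg List.ofFn (funext fun j => ?_)
    simp only [Function.comp_apply, map_pow, e_iota, MonoidAlgebra.single_pow, one_pow,
      of_pow]
  rw [h1]
  have h2 : (List.ofFn fun j : Fin r => MonoidAlgebra.single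
        (FreeMonoid.ofList (List.replicate (u j) (i j))) (1 : ℂ))
      = (List.ofFn fun j : Fin r =>
          FreeMonoid.ofList (List.replicate (u j) (i j))).map
        (fun w => MonoidAlgebra.single w 1) := by
    rw [List.map_ofFn]; rfl
  rw [h2, prod_single]
  congr 1
  have h3 : (List.ofFn fun j : Fin r => FreeMonoid.ofList (List.replicate (u j) (i j)))
      = (List.ofFn fun j : Fin r => List.replicate (u j) (i j)).map FreeMonoid.ofList := by
    rw [List.map_ofFn]; rfl
  rw [h3, prod_ofList]

end Stmt1Aux

/-- If `N ≥ 2`, the family `(P_u)`, indexed by nonempty finite sequences of positive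
integers, is linearly independent over `ℂ` in `ℂ⟨x_1,…,x_N⟩`. -/
theorem stmt1 (N : ℕ) (hN : 2 ≤ N) :
    LinearIndependent ℂ
      (fun u : {l : List ℕ // l ≠ [] ∧ ∀ n ∈ l, 1 ≤ n} => Pl N u.1) := by
  classical
  rw [linearIndependent_iff']
  intro s g hg u hu
  set r := u.1.length with hr
  -- the canonical alternating index function
  set i₀ : Fin r → Fin N := fun j => ⟨j.1 % 2, lt_of_lt_of_le (Nat.mod_lt _ two_pos) hN⟩
    with hi₀
  -- the canonical word
  set w₀ : FreeMonoid (Fin N) := FreeMonoid.ofList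
    ((List.ofFn fun j : Fin r => List.replicate (u.1.get j) (i₀ j)).flatten) with hw₀
  -- the coefficient functional at w₀
  set φ : FreeAlgebra ℂ (Fin N) →ₗ[ℂ] ℂ :=
    (Finsupp.lapply w₀).comp ((MonoidAlgebra.coeffLinearEquiv ℂ).toLinearMap.comp
      FreeAlgebra.equivMonoidAlgebraFreeMonoid.toLinearMap) with hφ
  -- the pairs encoding
  have pairs_chain : ∀ (v : List ℕ) (i : Fin v.length → Fin N),
      (∀ j k : Fin v.length, (k : ℕ) = (j : ℕ) + 1 → i j ≠ i k) →
      (List.ofFn fun j => (i j, v.get j)).Chain' (fun y z => y.1 ≠ z.1) := by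
    intro v i hi
    refine List.isChain_ofFn.mpr ?_
    intro jj hjj
    exact hi ⟨jj, by omega⟩ ⟨jj + 1, hjj⟩ rfl
  have pairs_pos : ∀ (v : {l : List ℕ // l ≠ [] ∧ ∀ n ∈ l, 1 ≤ n})
      (i : Fin v.1.length → Fin N),
      ∀ x ∈ (List.ofFn fun j => (i j, v.1.get j)), 0 < x.2 := by
    intro v i x hx
    rw [List.mem_ofFn] at hx
    obtain ⟨j, hj⟩ := hx
    rw [← hj]
    exact v.2.2 _ (List.get_mem v.1 j)
  have word_pairs : ∀ (v : List ℕ) (i : Fin v.length → Fin N),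
      Stmt1Aux.wordOf (List.ofFn fun j => (i j, v.get j))
        = (List.ofFn fun j => List.replicate (v.get j) (i j)).flatten := by
    intro v i
    unfold Stmt1Aux.wordOf
    rw [List.map_ofFn]
    rfl
  -- i₀ is admissible
  have hi₀adm : ∀ j k : Fin r, (k : ℕ) = (j : ℕ) + 1 → i₀ j ≠ i₀ k := by
    intro j k hk hjk
    rw [hi₀] at hjk
    simp only [Fin.mk.injEq] at hjk
    omega
  -- coefficient of Pl N v at w₀
  have key : ∀ v ∈ s, φ (Pl N v.1) = if v = u then 1 else 0 := by
    intro v _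
    rw [Pl, Pu, map_sum]
    have hterm : ∀ i : Fin v.1.length → Fin N,
        φ ((List.ofFn fun j => FreeAlgebra.ι ℂ (i j) ^ v.1.get j).prod)
        = if FreeMonoid.ofList ((List.ofFn fun j =>
            List.replicate (v.1.get j) (i j)).flatten) = w₀ then (1 : ℂ) else 0 := by
      intro i
      have hrfl : φ ((List.ofFn fun j => FreeAlgebra.ι ℂ (i j) ^ v.1.get j).prod)
          = (FreeAlgebra.equivMonoidAlgebraFreeMonoid
              ((List.ofFn fun j => FreeAlgebra.ι ℂ (i j) ^ v.1.get j).prod)).coeff w₀ := rfl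
      rw [hrfl, Stmt1Aux.e_monomial]
      exact Finsupp.single_apply
    by_cases hvu : v = u
    · subst hvu
      rw [if_pos rfl]
      rw [Finset.sum_congr rfl (fun i _ => hterm i)]
      have hmem : i₀ ∈ Finset.univ.filter
          (fun i : Fin r → Fin N => ∀ j k : Fin r, (k : ℕ) = (j : ℕ) + 1 → i j ≠ i k) := by
        simp only [Finset.mem_filter, Finset.mem_univ, true_and]
        exact hi₀adm
      rw [Finset.sum_eq_single_of_mem i₀ hmem]
      · rw [if_pos rfl]
      · intro i hi hne
        rw [if_neg]
        intro hword
        apply hne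
        have hww : Stmt1Aux.wordOf (List.ofFn fun j => (i j, v.1.get j))
            = Stmt1Aux.wordOf (List.ofFn fun j => (i₀ j, v.1.get j)) := by
          rw [word_pairs, word_pairs]
          rw [hw₀] at hword
          exact FreeMonoid.ofList.injective hword
        rw [Finset.mem_filter] at hi
        have heq := Stmt1Aux.rle_unique _ _
          (pairs_chain v.1 i hi.2) (pairs_chain v.1 i₀ hi₀adm)
          (pairs_pos v i) (pairs_pos v i₀) hww
        have hfun := List.ofFn_inj.mp heq
        funext j
        exact congrArg Prod.fst (congrFun hfun j)
    · rw [if_neg hvu]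
      rw [Finset.sum_congr rfl (fun i _ => hterm i)]
      apply Finset.sum_eq_zero
      intro i hi
      rw [if_neg]
      intro hword
      apply hvu
      have hww : Stmt1Aux.wordOf (List.ofFn fun j => (i j, v.1.get j))
          = Stmt1Aux.wordOf (List.ofFn fun j => (i₀ j, u.1.get j)) := by
        rw [word_pairs, word_pairs]
        rw [hw₀] at hword
        exact FreeMonoid.ofList.injective hword
      rw [Finset.mem_filter] at hi
      have heq := Stmt1Aux.rle_unique _ _
        (pairs_chain v.1 i hi.2) (pairs_chain u.1 i₀ hi₀adm)
        (pairs_pos v i) (pairs_pos u i₀) hww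
      have h2 := congrArg (List.map Prod.snd) heq
      rw [List.map_ofFn, List.map_ofFn] at h2
      have h3 : v.1 = u.1 := by
        have hv : List.ofFn ((Prod.snd ∘ fun j => (i j, v.1.get j))) = v.1 := by
          simp [Function.comp_def]
        have hu' : List.ofFn ((Prod.snd ∘ fun j => (i₀ j, u.1.get j))) = u.1 := by
          simp [Function.comp_def]
          exact List.ofFn_getElem
        rw [hv, hu'] at h2
        exact h2
      exact Subtype.ext h3
  -- conclude
  have h2 := congrArg φ hg
  rw [map_sum, map_zero] at h2
  simp only [map_smul, smul_eq_mul] at h2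
  rw [Finset.sum_congr rfl (fun v hv => by rw [key v hv])] at h2
  simp only [mul_ite, mul_one, mul_zero] at h2
  rw [Finset.sum_ite_eq' s u (fun v => g v), if_pos hu] at h2
  exact h2
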